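/- Let n be a positive integer, r_s > 0 and ε > 0 real numbers, and 𝒦 a finite set with |𝒦| = 2^{n·r_s}. Let (K, Z) be jointly distributed random variables on 𝒦 × 𝒵 (𝒵 finite) with K uniformly distributed on 𝒦, and suppose I(K;Z) ≤ ε. Then for every stochastic map ψ ∈ P(𝒦∪{!} | 𝒵): Pr( ψ(K|Z) > 2^{−n(r_s − 2ε)} ) ≤ 1/n + 1/(nε) + 2^{−nε}. -/

import Mathlib

open scoped BigOperators Classical

noncomputable section

/-- A stochastic map (conditional probability distribution). -/
def IsStochastic {B A : Type*} [Fintype A] (p : B → A → ℝ) : Prop :=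
  (∀ b a, 0 ≤ p b a) ∧ ∀ b, ∑ a, p b a = 1

/-- if `K` is uniform on a key set `𝒦` with `|𝒦| = 2^{n·r_s}`,
`(K, Z)` have joint pmf `p` with `I(K;Z) ≤ ε` (base-2 logarithm), then for every
stochastic map `ψ ∈ P(𝒦 ∪ {!} | 𝒵)`,
`Pr(ψ(K|Z) > 2^{−n(r_s − 2ε)}) ≤ 1/n + 1/(nε) + 2^{−nε}`. -/
theorem statement10 {𝒦 𝒵 : Type} [Fintype 𝒦] [Fintype 𝒵]
    (n : ℕ) (hn : 0 < n) (rs ε : ℝ) (hrs : 0 < rs) (hε : 0 < ε)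
    (hcard : (Fintype.card 𝒦 : ℝ) = (2 : ℝ) ^ ((n : ℝ) * rs))
    (p : 𝒦 × 𝒵 → ℝ) (hp0 : ∀ x, 0 ≤ p x) (hp1 : ∑ x, p x = 1)
    (hunif : ∀ k, ∑ z, p (k, z) = (Fintype.card 𝒦 : ℝ)⁻¹)
    (hI : ∑ x : 𝒦 × 𝒵,
        p x * Real.logb 2 (p x / ((∑ z, p (x.1, z)) * (∑ k, p (k, x.2)))) ≤ ε)
    (ψ : 𝒵 → Option 𝒦 → ℝ) (hψ : IsStochastic ψ) :
    (∑ x : 𝒦 × 𝒵,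
        if (2 : ℝ) ^ (-(n : ℝ) * (rs - 2 * ε)) < ψ x.2 (some x.1) then p x else 0)
      ≤ 1 / (n : ℝ) + 1 / ((n : ℝ) * ε) + (2 : ℝ) ^ (-(n : ℝ) * ε) := by
  classical
  have hn' : (0:ℝ) < n := by exact_mod_cast hn
  set t : ℝ := (2:ℝ) ^ (-(n:ℝ) * (rs - 2*ε)) with ht_def
  set c : ℝ := (2:ℝ) ^ ((n:ℝ) * ε) with hc_def
  have ht : 0 < t := Real.rpow_pos_of_pos two_pos _
  have hcpos : 0 < c := Real.rpow_pos_of_pos two_pos _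
  have hKpos : (0:ℝ) < (Fintype.card 𝒦 : ℝ) := by
    rw [hcard]; exact Real.rpow_pos_of_pos two_pos _
  -- marginal on 𝒵
  set pZ : 𝒵 → ℝ := fun z => ∑ k, p (k, z) with hpZ_def
  have hpZ0 : ∀ z, 0 ≤ pZ z := fun z => Finset.sum_nonneg fun k _ => hp0 _
  have hp1' : ∑ k, ∑ z, p (k, z) = 1 := by rw [← hp1, Fintype.sum_prod_type]
  have hpZ1 : ∑ z, pZ z = 1 := by rw [← hp1', Finset.sum_comm]
  set q : 𝒦 × 𝒵 → ℝ := fun x => (Fintype.card 𝒦 : ℝ)⁻¹ * pZ x.2 with hq_def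
  have hq0 : ∀ x, 0 ≤ q x := fun x => mul_nonneg (inv_nonneg.2 hKpos.le) (hpZ0 _)
  have hple : ∀ x : 𝒦 × 𝒵, p x ≤ pZ x.2 := by
    intro x
    have := Finset.single_le_sum (f := fun k => p (k, x.2))
      (fun i _ => hp0 _) (Finset.mem_univ x.1)
    simpa using this
  have hqp : ∀ x : 𝒦 × 𝒵, q x = 0 → p x = 0 := by
    intro x hx
    have h1 : pZ x.2 = 0 := by
      rcases mul_eq_zero.1 hx with h | h
      · exact absurd h (inv_ne_zero (ne_of_gt hKpos))
      · exact h
    have := hple x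
    have := hp0 x
    linarith
  -- rewrite the mutual information hypothesis
  have hI' : ∑ x : 𝒦 × 𝒵, p x * Real.logb 2 (p x / q x) ≤ ε := by
    calc ∑ x : 𝒦 × 𝒵, p x * Real.logb 2 (p x / q x)
        = ∑ x : 𝒦 × 𝒵,
          p x * Real.logb 2 (p x / ((∑ z, p (x.1, z)) * (∑ k, p (k, x.2)))) := by
          apply Finset.sum_congr rfl
          intro x _
          rw [hunif x.1]
      _ ≤ ε := hI
  -- abbreviation
  set pq : 𝒦 × 𝒵 → ℝ := fun x => p x * Real.logb 2 (p x / q x) with hpq_def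
  -- negative part pointwise bound
  have hneg : ∀ x : 𝒦 × 𝒵, -(pq x) ≤ q x * (Real.exp 1 * Real.log 2)⁻¹ := by
    intro x
    have helog : (0:ℝ) < Real.exp 1 * Real.log 2 :=
      mul_pos (Real.exp_pos 1) (Real.log_pos one_lt_two)
    rcases eq_or_lt_of_le (hp0 x) with h0 | hpx
    · have hz : pq x = 0 := by simp [hpq_def, ← h0]
      rw [hz, neg_zero]
      exact mul_nonneg (hq0 x) (inv_nonneg.2 helog.le)
    · have hqx : 0 < q x := by
        rcases eq_or_lt_of_le (hq0 x) with h | h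
        · exact absurd (hqp x h.symm) (by linarith)
        · exact h
      -- -(p * logb 2 (p/q)) = p * logb 2 (q/p)
      have key : -(pq x) = p x * Real.logb 2 (q x / p x) := by
        have hlb : Real.logb 2 (q x / p x) = - Real.logb 2 (p x / q x) := by
          rw [← Real.logb_inv, inv_div]
        rw [hpq_def]; simp only [hlb]; ring
      rw [key]
      -- logb 2 y ≤ y / (e * log 2)
      have hlog : Real.log (q x / p x) ≤ (q x / p x) / Real.exp 1 := by
        have h1 : Real.log ((q x / p x) / Real.exp 1) ≤ (q x / p x) / Real.exp 1 - 1 :=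
          Real.log_le_sub_one_of_pos (by positivity)
        rw [Real.log_div (by positivity) (Real.exp_ne_zero 1), Real.log_exp] at h1
        linarith
      have hlogb : Real.logb 2 (q x / p x) ≤ (q x / p x) / Real.exp 1 / Real.log 2 := by
        rw [Real.logb, div_le_div_iff_of_pos_right (Real.log_pos one_lt_two)]  -- maybe wrong lemma
        exact hlog
      calc p x * Real.logb 2 (q x / p x)
          ≤ p x * ((q x / p x) / Real.exp 1 / Real.log 2) := by
            exact mul_le_mul_of_nonneg_left hlogb (hp0 x)
        _ = q x * (Real.exp 1 * Real.log 2)⁻¹ := by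
            field_simp
  -- total mass of q is 1
  have hqsum : ∑ x : 𝒦 × 𝒵, q x = 1 := by
    rw [Fintype.sum_prod_type]
    have : ∀ k : 𝒦, ∑ z, q (k, z) = (Fintype.card 𝒦 : ℝ)⁻¹ := by
      intro k
      rw [hq_def]
      simp only
      rw [← Finset.mul_sum, hpZ1, mul_one]
    rw [Finset.sum_congr rfl fun k _ => this k]
    rw [Finset.sum_const, Finset.card_univ, nsmul_eq_mul]
    field_simp
  -- counting bound: for each z, at most t⁻¹ keys pass the threshold
  have hcount : ∀ z : 𝒵,
      ((Finset.univ.filter fun k : 𝒦 => t < ψ z (some k)).card : ℝ) ≤ t⁻¹ := by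
    intro z
    set S := Finset.univ.filter fun k : 𝒦 => t < ψ z (some k) with hS
    have h1 : (S.card : ℝ) * t ≤ 1 := by
      have h2 : (S.card : ℝ) * t = ∑ _k ∈ S, t := by
        rw [Finset.sum_const, nsmul_eq_mul]
      have h3 : ∑ k ∈ S, t ≤ ∑ k ∈ S, ψ z (some k) := by
        apply Finset.sum_le_sum
        intro k hk
        exact le_of_lt (Finset.mem_filter.1 hk).2
      have h4 : ∑ k ∈ S, ψ z (some k) ≤ ∑ k : 𝒦, ψ z (some k) := by
        apply Finset.sum_le_sum_of_subset_of_nonneg (Finset.filter_subset _ _)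
        intro k _ _
        exact hψ.1 z (some k)
      have h5 : ∑ k : 𝒦, ψ z (some k) ≤ 1 := by
        have := hψ.2 z
        rw [Fintype.sum_option] at this
        have h6 := hψ.1 z none
        linarith
      linarith [h2, h3, h4, h5]
    rw [← mul_le_mul_iff_of_pos_right ht, inv_mul_cancel₀ (ne_of_gt ht)]
    exact h1
  -- sum of q over the event
  have hqevent : ∑ x : 𝒦 × 𝒵, (if t < ψ x.2 (some x.1) then q x else 0)
      ≤ (Fintype.card 𝒦 : ℝ)⁻¹ * t⁻¹ := by
    have hswap : ∑ x : 𝒦 × 𝒵, (if t < ψ x.2 (some x.1) then q x else 0)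
        = ∑ z : 𝒵, ∑ k : 𝒦, (if t < ψ z (some k) then q (k, z) else 0) := by
      rw [Fintype.sum_prod_type, Finset.sum_comm]
    rw [hswap]
    have hinner : ∀ z : 𝒵, ∑ k : 𝒦, (if t < ψ z (some k) then q (k, z) else 0)
        ≤ (Fintype.card 𝒦 : ℝ)⁻¹ * pZ z * t⁻¹ := by
      intro z
      have heq : ∑ k : 𝒦, (if t < ψ z (some k) then q (k, z) else 0)
          = ((Finset.univ.filter fun k : 𝒦 => t < ψ z (some k)).card : ℝ)
            * ((Fintype.card 𝒦 : ℝ)⁻¹ * pZ z) := by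
        simp only [hq_def]
        rw [← Finset.sum_filter, Finset.sum_const, nsmul_eq_mul]
      rw [heq]
      nlinarith [hcount z, mul_nonneg (inv_nonneg.2 hKpos.le) (hpZ0 z),
        mul_le_mul_of_nonneg_right (hcount z) (mul_nonneg (inv_nonneg.2 hKpos.le) (hpZ0 z))]
    calc ∑ z : 𝒵, ∑ k : 𝒦, (if t < ψ z (some k) then q (k, z) else 0)
        ≤ ∑ z : 𝒵, (Fintype.card 𝒦 : ℝ)⁻¹ * pZ z * t⁻¹ :=
          Finset.sum_le_sum fun z _ => hinner z
      _ = (Fintype.card 𝒦 : ℝ)⁻¹ * t⁻¹ := by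
          rw [← Finset.sum_mul, ← Finset.mul_sum, hpZ1, mul_one]
  -- the key numeric identity
  have hnum : c * ((Fintype.card 𝒦 : ℝ)⁻¹ * t⁻¹) = (2:ℝ) ^ (-(n:ℝ) * ε) := by
    rw [hcard, ht_def, hc_def]
    rw [← Real.rpow_neg (by norm_num : (0:ℝ) ≤ 2), ← Real.rpow_neg (by norm_num : (0:ℝ) ≤ 2)]
    rw [← Real.rpow_add two_pos, ← Real.rpow_add two_pos]
    congr 1
    ring
  -- split the sum
  have hsplit : (∑ x : 𝒦 × 𝒵, if t < ψ x.2 (some x.1) then p x else 0)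
      ≤ (∑ x : 𝒦 × 𝒵, if t < ψ x.2 (some x.1) then c * q x else 0)
        + ∑ x : 𝒦 × 𝒵, (if c * q x < p x then p x else 0) := by
    rw [← Finset.sum_add_distrib]
    apply Finset.sum_le_sum
    intro x _
    have h1 := hp0 x
    have h2 := hq0 x
    have h4 : 0 ≤ c * q x := mul_nonneg hcpos.le (hq0 x)
    split_ifs with hE hA hA'
    · linarith
    · push_neg at hA; linarith
    · linarith
    · linarith
  -- bound the first piece
  have hfirst : (∑ x : 𝒦 × 𝒵, if t < ψ x.2 (some x.1) then c * q x else 0)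
      ≤ (2:ℝ) ^ (-(n:ℝ) * ε) := by
    have : (∑ x : 𝒦 × 𝒵, if t < ψ x.2 (some x.1) then c * q x else 0)
        = c * ∑ x : 𝒦 × 𝒵, (if t < ψ x.2 (some x.1) then q x else 0) := by
      rw [Finset.mul_sum]
      apply Finset.sum_congr rfl
      intro x _
      split_ifs <;> ring
    rw [this, ← hnum]
    exact mul_le_mul_of_nonneg_left hqevent hcpos.le
  -- Markov bound for the second piece
  have hlogbc : Real.logb 2 c = (n:ℝ) * ε := by
    rw [hc_def, Real.logb_rpow two_pos (by norm_num)]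
  have hsecond : (∑ x : 𝒦 × 𝒵, (if c * q x < p x then p x else 0)) * ((n:ℝ) * ε)
      ≤ ε + (Real.exp 1 * Real.log 2)⁻¹ := by
    have step1 : (∑ x : 𝒦 × 𝒵, (if c * q x < p x then p x else 0)) * ((n:ℝ) * ε)
        ≤ ∑ x : 𝒦 × 𝒵, (if c * q x < p x then pq x else 0) := by
      rw [Finset.sum_mul]
      apply Finset.sum_le_sum
      intro x _
      split_ifs with hA
      · -- p x > c * q x ≥ 0, so p x > 0, q x > 0
        have hpx : 0 < p x := lt_of_le_of_lt (mul_nonneg hcpos.le (hq0 x)) hA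
        have hqx : 0 < q x := by
          rcases eq_or_lt_of_le (hq0 x) with h | h
          · exact absurd (hqp x h.symm) (ne_of_gt hpx)
          · exact h
        have hdiv : c < p x / q x := (lt_div_iff₀ hqx).2 (by linarith)
        have hlb : (n:ℝ) * ε ≤ Real.logb 2 (p x / q x) := by
          rw [← hlogbc]
          exact Real.logb_le_logb_of_le one_lt_two hcpos hdiv.le
        calc p x * ((n:ℝ) * ε) ≤ p x * Real.logb 2 (p x / q x) :=
              mul_le_mul_of_nonneg_left hlb (hp0 x)
          _ = pq x := rfl
      · simp
    have step2 : ∑ x : 𝒦 × 𝒵, (if c * q x < p x then pq x else 0)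
        ≤ ∑ x : 𝒦 × 𝒵, (pq x + q x * (Real.exp 1 * Real.log 2)⁻¹) := by
      apply Finset.sum_le_sum
      intro x _
      have h1 := hneg x
      have h2 : 0 ≤ q x * (Real.exp 1 * Real.log 2)⁻¹ := by
        have h3 : (0:ℝ) < Real.exp 1 * Real.log 2 :=
          mul_pos (Real.exp_pos 1) (Real.log_pos one_lt_two)
        exact mul_nonneg (hq0 x) (inv_nonneg.2 h3.le)
      split_ifs with hA <;> linarith
    have step3 : ∑ x : 𝒦 × 𝒵, (pq x + q x * (Real.exp 1 * Real.log 2)⁻¹)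
        ≤ ε + (Real.exp 1 * Real.log 2)⁻¹ := by
      rw [Finset.sum_add_distrib, ← Finset.sum_mul, hqsum, one_mul]
      exact add_le_add hI' le_rfl
    linarith
  -- finish
  have heln2 : (1:ℝ) ≤ Real.exp 1 * Real.log 2 := by
    have h1 : (2.7182818283:ℝ) < Real.exp 1 := Real.exp_one_gt_d9
    have h2 : (0.6931471803:ℝ) < Real.log 2 := Real.log_two_gt_d9
    nlinarith
  have hsecond' : (∑ x : 𝒦 × 𝒵, (if c * q x < p x then p x else 0))
      ≤ 1 / (n:ℝ) + 1 / ((n:ℝ) * ε) := by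
    have hnε : (0:ℝ) < (n:ℝ) * ε := mul_pos hn' hε
    have hinv : (Real.exp 1 * Real.log 2)⁻¹ ≤ 1 := by
      rw [inv_le_one_iff₀]
      right
      exact heln2
    have := hsecond
    rw [← le_div_iff₀ hnε] at this
    calc (∑ x : 𝒦 × 𝒵, (if c * q x < p x then p x else 0))
        ≤ (ε + (Real.exp 1 * Real.log 2)⁻¹) / ((n:ℝ) * ε) := this
      _ ≤ (ε + 1) / ((n:ℝ) * ε) := by
          gcongr
      _ = 1 / (n:ℝ) + 1 / ((n:ℝ) * ε) := by
          field_simp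
  linarith [hsplit, hfirst, hsecond']
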